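/- arXiv:1504.04508 — 2 statements merged into one kernel-verified Lean document; each statement's English description precedes it below -/
import Mathlib

section
/- Let M be a connected smooth manifold, φ a 3-form and θ a closed 1-form with dφ = −θ∧φ. Suppose the map sending 1-forms α to α∧φ is pointwise injective. If f is a smooth function and ω a 2-form with d_θ ω = f φ, then f is constant. -/
open scoped ContDiff

noncomputable section

/-- A differential `k`-form on the vector space (smooth manifold) `E`,
given by its evaluation on `k` tangent vectors at each point. -/
def Form (E : Type*) [NormedAddCommGroup E] [NormedSpace ℝ E] (k : ℕ) :=
  E → (Fin k → E) → ℝ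

variable {E : Type*} [NormedAddCommGroup E] [NormedSpace ℝ E]

/-- The exterior derivative of a `k`-form on a vector space, via the standard
formula `dα(v₀,…,v_k) = Σᵢ (−1)ⁱ ∂_{vᵢ} α(v₀,…,v̂ᵢ,…,v_k)` for constant vector fields. -/
def extd {k : ℕ} (α : Form E k) : Form E (k + 1) :=
  fun x v => ∑ i : Fin (k + 1),
    (-1 : ℝ) ^ (i : ℕ) * fderiv ℝ (fun y => α y (fun j => v (i.succAbove j))) x (v i)

/-- Wedge product of a 1-form with a `k`-form. -/
def wedge1 {k : ℕ} (θ : Form E 1) (α : Form E k) : Form E (k + 1) :=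
  fun x v => ∑ i : Fin (k + 1),
    (-1 : ℝ) ^ (i : ℕ) * θ x ![v i] * α x (fun j => v (i.succAbove j))

/-- The twisted differential `d_θ α = dα + θ ∧ α`. -/
def dTheta {k : ℕ} (θ : Form E 1) (α : Form E k) : Form E (k + 1) :=
  fun x v => extd α x v + wedge1 θ α x v

/-- A form is smooth if each of its evaluations on fixed tangent vectors is smooth
and it is pointwise alternating and multilinear. -/
def SmoothForm {k : ℕ} (α : Form E k) : Prop :=
  (∀ v : Fin k → E, ContDiff ℝ ∞ (fun x => α x v)) ∧
  (∀ x, ∃ A : E [⋀^Fin k]→ₗ[ℝ] ℝ, ∀ v, α x v = A v)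

/-- The interior product of a vector field with a `(k+1)`-form. -/
def iProd {k : ℕ} (X : E → E) (φ : Form E (k + 1)) : Form E k :=
  fun x v => φ x (Fin.cons (X x) v)

/-- The Lie derivative of a form along a vector field, via Cartan's magic formula
`L_X = d ∘ i_X + i_X ∘ d`. -/
def lieDeriv {k : ℕ} (X : E → E) (φ : Form E (k + 1)) : Form E (k + 1) :=
  fun x v => extd (iProd X φ) x v + iProd X (extd φ) x v

end

section Aux

variable {E : Type*} [NormedAddCommGroup E] [NormedSpace ℝ E]

/-- canonical pair enumeration -/
noncomputable def pr2 (a b : Fin 4) : Fin 2 → Fin 4 := ![a, b]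

theorem contDiff_fd {g : E → ℝ} (hg : ContDiff ℝ ∞ g) (u : E) :
    ContDiff ℝ ∞ (fun y => fderiv ℝ g y u) := by
  have h1 : ContDiff ℝ ∞ (fderiv ℝ g) := hg.fderiv_right (m := ∞) (by norm_num)
  exact (ContinuousLinearMap.apply ℝ ℝ u).contDiff.comp h1

theorem diffAt_fd {g : E → ℝ} (hg : ContDiff ℝ ∞ g) (u x : E) :
    DifferentiableAt ℝ (fun y => fderiv ℝ g y u) x :=
  ((contDiff_fd hg u).differentiable (by norm_num)).differentiableAt

theorem symm2 {g : E → ℝ} (hg : ContDiff ℝ ∞ g) (x u w : E) :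
    fderiv ℝ (fun y => fderiv ℝ g y u) x w = fderiv ℝ (fun y => fderiv ℝ g y w) x u := by
  have hd : DifferentiableAt ℝ (fderiv ℝ g) x :=
    ((hg.fderiv_right (m := ∞) (by norm_num)).differentiable (by norm_num)).differentiableAt
  have hsymm : IsSymmSndFDerivAt ℝ g x :=
    (hg.of_le (by decide : (2:WithTop ℕ∞) ≤ ∞)).contDiffAt.isSymmSndFDerivAt (by simp)
  rw [fderiv_clm_apply hd (differentiableAt_const u),
    fderiv_clm_apply hd (differentiableAt_const w)]
  simp [hsymm.eq w u]

theorem expandL (om : Form E 2) (homs : ∀ W, ContDiff ℝ ∞ fun z => om z W)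
    (w : Fin 3 → E) (x u : E) :
    fderiv ℝ (fun y => extd om y w) x u =
      fderiv ℝ (fun y => fderiv ℝ (fun z => om z fun k => w ((0:Fin 3).succAbove k)) y (w 0)) x u
      - fderiv ℝ (fun y => fderiv ℝ (fun z => om z fun k => w ((1:Fin 3).succAbove k)) y (w 1)) x u
      + fderiv ℝ (fun y => fderiv ℝ (fun z => om z fun k => w ((2:Fin 3).succAbove k)) y (w 2)) x u := by
  have h0 := diffAt_fd (homs (fun k => w ((0:Fin 3).succAbove k))) (w 0) x
  have h1 := diffAt_fd (homs (fun k => w ((1:Fin 3).succAbove k))) (w 1) x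
  have h2 := diffAt_fd (homs (fun k => w ((2:Fin 3).succAbove k))) (w 2) x
  have hrw : (fun y => extd om y w) =
      (fun y => (fderiv ℝ (fun z => om z fun k => w ((0:Fin 3).succAbove k)) y (w 0)
        - fderiv ℝ (fun z => om z fun k => w ((1:Fin 3).succAbove k)) y (w 1))
        + fderiv ℝ (fun z => om z fun k => w ((2:Fin 3).succAbove k)) y (w 2)) := by
    funext y
    simp [extd, Fin.sum_univ_three]
    ring
  rw [hrw, fderiv_fun_add (h0.fun_sub h1) h2, fderiv_fun_sub h0 h1]
  simp

theorem expandR (θ : Form E 1) (hθs : ∀ W, ContDiff ℝ ∞ fun z => θ z W)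
    (om : Form E 2) (homs : ∀ W, ContDiff ℝ ∞ fun z => om z W)
    (φ : Form E 3) (hφs : ∀ W, ContDiff ℝ ∞ fun z => φ z W)
    (f : E → ℝ) (hf : ContDiff ℝ ∞ f)
    (w : Fin 3 → E) (x u : E) :
    fderiv ℝ (fun y => f y * φ y w - wedge1 θ om y w) x u =
      (fderiv ℝ f x u * φ x w + f x * fderiv ℝ (fun y => φ y w) x u)
      - ((fderiv ℝ (fun y => θ y ![w 0]) x u * om x (fun k => w ((0:Fin 3).succAbove k))
            + θ x ![w 0] * fderiv ℝ (fun y => om y (fun k => w ((0:Fin 3).succAbove k))) x u)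
        - (fderiv ℝ (fun y => θ y ![w 1]) x u * om x (fun k => w ((1:Fin 3).succAbove k))
            + θ x ![w 1] * fderiv ℝ (fun y => om y (fun k => w ((1:Fin 3).succAbove k))) x u)
        + (fderiv ℝ (fun y => θ y ![w 2]) x u * om x (fun k => w ((2:Fin 3).succAbove k))
            + θ x ![w 2] * fderiv ℝ (fun y => om y (fun k => w ((2:Fin 3).succAbove k))) x u)) := by
  have dθ : ∀ W x0, DifferentiableAt ℝ (fun z => θ z W) x0 :=
    fun W x0 => ((hθs W).differentiable (by norm_num)).differentiableAt
  have dom : ∀ W x0, DifferentiableAt ℝ (fun z => om z W) x0 :=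
    fun W x0 => ((homs W).differentiable (by norm_num)).differentiableAt
  have dφ : ∀ W x0, DifferentiableAt ℝ (fun z => φ z W) x0 :=
    fun W x0 => ((hφs W).differentiable (by norm_num)).differentiableAt
  have df : DifferentiableAt ℝ f x := (hf.differentiable (by norm_num)).differentiableAt
  have hrw : (fun y => f y * φ y w - wedge1 θ om y w) =
      (fun y => f y * φ y w -
        ((θ y ![w 0] * om y (fun k => w ((0:Fin 3).succAbove k))
          - θ y ![w 1] * om y (fun k => w ((1:Fin 3).succAbove k)))
          + θ y ![w 2] * om y (fun k => w ((2:Fin 3).succAbove k)))) := by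
    funext y
    simp [wedge1, Fin.sum_univ_three]
    ring
  rw [hrw]
  rw [fderiv_fun_sub (df.fun_mul (dφ w x))
      ((((dθ ![w 0] x).fun_mul (dom _ x)).fun_sub ((dθ ![w 1] x).fun_mul (dom _ x))).fun_add
        ((dθ ![w 2] x).fun_mul (dom _ x)))]
  rw [fderiv_fun_add (((dθ ![w 0] x).fun_mul (dom _ x)).fun_sub ((dθ ![w 1] x).fun_mul (dom _ x)))
      ((dθ ![w 2] x).fun_mul (dom _ x))]
  rw [fderiv_fun_sub ((dθ ![w 0] x).fun_mul (dom _ x)) ((dθ ![w 1] x).fun_mul (dom _ x))]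
  rw [fderiv_fun_mul df (dφ w x), fderiv_fun_mul (dθ ![w 0] x) (dom _ x),
    fderiv_fun_mul (dθ ![w 1] x) (dom _ x), fderiv_fun_mul (dθ ![w 2] x) (dom _ x)]
  simp
  ring

end Aux

/-- If `M` is connected, `dφ = -θ ∧ φ`, `α ↦ α ∧ φ` is pointwise
injective on 1-forms, and `d_θ om = f φ`, then `f` is constant. -/
theorem dTheta_eq_smul_const {E : Type*} [NormedAddCommGroup E] [NormedSpace ℝ E]
    (θ : Form E 1) (hθ : SmoothForm θ) (hclosed : ∀ x v, extd θ x v = 0)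
    (φ : Form E 3) (hφ : SmoothForm φ)
    (hlcc : ∀ x v, extd φ x v = -wedge1 θ φ x v)
    (hinj : ∀ (x : E) (ℓ : E →ₗ[ℝ] ℝ),
      (∀ v : Fin 4 → E,
        ∑ i : Fin 4, (-1 : ℝ) ^ (i : ℕ) * ℓ (v i) * φ x (fun j => v (i.succAbove j)) = 0) →
      ℓ = 0)
    (f : E → ℝ) (hf : ContDiff ℝ ∞ f) (om : Form E 2) (hom : SmoothForm om)
    (heq : ∀ x v, dTheta θ om x v = f x * φ x v) :
    ∀ x y : E, f x = f y := by
  obtain ⟨hθs, -⟩ := hθ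
  obtain ⟨hφs, -⟩ := hφ
  obtain ⟨homs, -⟩ := hom
  -- symmetry of the first derivative of the closed form θ
  have hQ : ∀ (x a b : E),
      fderiv ℝ (fun y => θ y ![a]) x b = fderiv ℝ (fun y => θ y ![b]) x a := by
    intro x a b
    have h := hclosed x ![b, a]
    have e0 : (fun j : Fin 1 => (![b, a] : Fin 2 → E) ((0:Fin 2).succAbove j)) = ![a] := by
      funext j; fin_cases j; rfl
    have e1 : (fun j : Fin 1 => (![b, a] : Fin 2 → E) ((1:Fin 2).succAbove j)) = ![b] := by
      funext j; fin_cases j; rfl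
    simp only [extd, Nat.reduceAdd, Fin.sum_univ_two, Fin.val_zero, Fin.val_one, pow_zero, pow_one,
      one_mul, neg_one_mul, Matrix.cons_val_zero, Matrix.cons_val_one, Matrix.head_cons,
      e0, e1] at h
    linarith
  have key : ∀ x : E, fderiv ℝ f x = 0 := by
    intro x
    have hS : ∀ (W : Fin 2 → E) (u w : E),
        fderiv ℝ (fun y => fderiv ℝ (fun z => om z W) y u) x w =
        fderiv ℝ (fun y => fderiv ℝ (fun z => om z W) y w) x u :=
      fun W u w => symm2 (homs W) x u w
    have main : ∀ v : Fin 4 → E,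
        ∑ i : Fin 4, (-1 : ℝ) ^ (i : ℕ) *
          ((fderiv ℝ f x : E →ₗ[ℝ] ℝ) (v i)) * φ x (fun j => v (i.succAbove j)) = 0 := by
      intro v
      -- index computations
      have s00 : (0:Fin 4).succAbove (0:Fin 3) = 1 := by decide
      have s01 : (0:Fin 4).succAbove (1:Fin 3) = 2 := by decide
      have s02 : (0:Fin 4).succAbove (2:Fin 3) = 3 := by decide
      have s10 : (1:Fin 4).succAbove (0:Fin 3) = 0 := by decide
      have s11 : (1:Fin 4).succAbove (1:Fin 3) = 2 := by decide
      have s12 : (1:Fin 4).succAbove (2:Fin 3) = 3 := by decide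
      have s20 : (2:Fin 4).succAbove (0:Fin 3) = 0 := by decide
      have s21 : (2:Fin 4).succAbove (1:Fin 3) = 1 := by decide
      have s22 : (2:Fin 4).succAbove (2:Fin 3) = 3 := by decide
      have s30 : (3:Fin 4).succAbove (0:Fin 3) = 0 := by decide
      have s31 : (3:Fin 4).succAbove (1:Fin 3) = 1 := by decide
      have s32 : (3:Fin 4).succAbove (2:Fin 3) = 2 := by decide
      have c00 : ∀ k : Fin 2, (0:Fin 4).succAbove ((0:Fin 3).succAbove k) = pr2 2 3 k := by decide
      have c01 : ∀ k : Fin 2, (0:Fin 4).succAbove ((1:Fin 3).succAbove k) = pr2 1 3 k := by decide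
      have c02 : ∀ k : Fin 2, (0:Fin 4).succAbove ((2:Fin 3).succAbove k) = pr2 1 2 k := by decide
      have c10 : ∀ k : Fin 2, (1:Fin 4).succAbove ((0:Fin 3).succAbove k) = pr2 2 3 k := by decide
      have c11 : ∀ k : Fin 2, (1:Fin 4).succAbove ((1:Fin 3).succAbove k) = pr2 0 3 k := by decide
      have c12 : ∀ k : Fin 2, (1:Fin 4).succAbove ((2:Fin 3).succAbove k) = pr2 0 2 k := by decide
      have c20 : ∀ k : Fin 2, (2:Fin 4).succAbove ((0:Fin 3).succAbove k) = pr2 1 3 k := by decide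
      have c21 : ∀ k : Fin 2, (2:Fin 4).succAbove ((1:Fin 3).succAbove k) = pr2 0 3 k := by decide
      have c22 : ∀ k : Fin 2, (2:Fin 4).succAbove ((2:Fin 3).succAbove k) = pr2 0 1 k := by decide
      have c30 : ∀ k : Fin 2, (3:Fin 4).succAbove ((0:Fin 3).succAbove k) = pr2 1 2 k := by decide
      have c31 : ∀ k : Fin 2, (3:Fin 4).succAbove ((1:Fin 3).succAbove k) = pr2 0 2 k := by decide
      have c32 : ∀ k : Fin 2, (3:Fin 4).succAbove ((2:Fin 3).succAbove k) = pr2 0 1 k := by decide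
      have hv40 : ((0:Fin 4) : ℕ) = 0 := rfl
      have hv41 : ((1:Fin 4) : ℕ) = 1 := rfl
      have hv42 : ((2:Fin 4) : ℕ) = 2 := rfl
      have hv43 : ((3:Fin 4) : ℕ) = 3 := rfl
      have hv30 : ((0:Fin 3) : ℕ) = 0 := rfl
      have hv31 : ((1:Fin 3) : ℕ) = 1 := rfl
      have hv32 : ((2:Fin 3) : ℕ) = 2 := rfl
      -- the differentiated equation
      have hD : ∀ (w : Fin 3 → E) (u : E),
          fderiv ℝ (fun y => extd om y w) x u =
          fderiv ℝ (fun y => f y * φ y w - wedge1 θ om y w) x u := by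
        intro w u
        have hfun : (fun y => extd om y w) = (fun y => f y * φ y w - wedge1 θ om y w) := by
          funext y
          have h := heq y w
          simp only [dTheta] at h
          linarith
        rw [hfun]
      have D0 := hD (fun j => v ((0:Fin 4).succAbove j)) (v 0)
      have D1 := hD (fun j => v ((1:Fin 4).succAbove j)) (v 1)
      have D2 := hD (fun j => v ((2:Fin 4).succAbove j)) (v 2)
      have D3 := hD (fun j => v ((3:Fin 4).succAbove j)) (v 3)
      rw [expandL om homs _ x _, expandR θ hθs om homs φ hφs f hf _ x _] at D0 D1 D2 D3
      simp only [s00, s01, s02, s10, s11, s12, s20, s21, s22, s30, s31, s32,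
        c00, c01, c02, c10, c11, c12, c20, c21, c22, c30, c31, c32] at D0 D1 D2 D3
      -- the value equations
      have E0 := heq x (fun j => v ((0:Fin 4).succAbove j))
      have E1 := heq x (fun j => v ((1:Fin 4).succAbove j))
      have E2 := heq x (fun j => v ((2:Fin 4).succAbove j))
      have E3 := heq x (fun j => v ((3:Fin 4).succAbove j))
      simp only [dTheta, extd, wedge1, Nat.reduceAdd, Fin.sum_univ_three, hv30, hv31, hv32,
        s00, s01, s02, s10, s11, s12, s20, s21, s22, s30, s31, s32,
        c00, c01, c02, c10, c11, c12, c20, c21, c22, c30, c31, c32] at E0 E1 E2 E3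
      -- the structure equation for φ
      have HP := hlcc x v
      simp only [extd, wedge1, Nat.reduceAdd, Fin.sum_univ_four, hv40, hv41, hv42, hv43] at HP
      -- symmetrize second derivatives of om
      rw [hS (fun k => v (pr2 2 3 k)) (v 0) (v 1)] at D1
      rw [hS (fun k => v (pr2 1 3 k)) (v 0) (v 2), hS (fun k => v (pr2 0 3 k)) (v 1) (v 2)] at D2
      rw [hS (fun k => v (pr2 1 2 k)) (v 0) (v 3), hS (fun k => v (pr2 0 2 k)) (v 1) (v 3),
        hS (fun k => v (pr2 0 1 k)) (v 2) (v 3)] at D3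
      -- symmetrize first derivatives of θ
      rw [hQ x (v 0) (v 1)] at D1
      rw [hQ x (v 0) (v 2), hQ x (v 1) (v 2)] at D2
      rw [hQ x (v 0) (v 3), hQ x (v 1) (v 3), hQ x (v 2) (v 3)] at D3
      simp only [ContinuousLinearMap.coe_coe, Fin.sum_univ_four, hv40, hv41, hv42, hv43]
      linear_combination (D1 - D0 + D3 - D2) - f x * HP
        - θ x ![v 0] * E0 + θ x ![v 1] * E1 - θ x ![v 2] * E2 + θ x ![v 3] * E3
    have h0 := hinj x (fderiv ℝ f x : E →ₗ[ℝ] ℝ) main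
    exact ContinuousLinearMap.coe_injective (h0.trans (ContinuousLinearMap.coe_zero).symm)
  exact is_const_of_fderiv_eq_zero (hf.differentiable (by norm_num)) key
end

section
/- On the seven-dimensional Lie algebra 𝔰 with structure equations de¹ = e³⁷, de² = e⁴⁷, de³ = −e¹⁷, de⁴ = −e²⁷, de⁵ = e¹⁴ + e²³, de⁶ = e¹³ − e²⁴, de⁷ = 0 (with respect to a basis e¹,...,e⁷ of the dual), the 3-form φ = (e¹² + e³⁴ + e⁵⁶) ∧ e⁷ + e¹³⁵ − e¹⁴⁶ − e²³⁶ − e²⁴⁵ satisfies dφ = e⁷ ∧ φ; that is, φ is locally conformal calibrated with Lee form θ = −e⁷. -/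
noncomputable section

variable {n : ℕ}

/-- The `i`-th coordinate covector `eᵢ`. -/
def ec (i : Fin n) : (Fin n → ℝ) → ℝ := fun x => x i

/-- A bracket is a Lie bracket if it is bilinear, antisymmetric and satisfies
the Jacobi identity. -/
def IsLieBracket (br : (Fin n → ℝ) → (Fin n → ℝ) → (Fin n → ℝ)) : Prop :=
  (∀ x y z, br (x + y) z = br x z + br y z) ∧
  (∀ (a : ℝ) x y, br (a • x) y = a • br x y) ∧
  (∀ x y, br x y = -br y x) ∧
  (∀ x y z, br x (br y z) + br y (br z x) + br z (br x y) = 0)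

/-- Chevalley–Eilenberg differential of a 1-form: `dα(x,y) = -α([x,y])`. -/
def ced1 (br : (Fin n → ℝ) → (Fin n → ℝ) → (Fin n → ℝ)) (α : (Fin n → ℝ) → ℝ) :
    (Fin n → ℝ) → (Fin n → ℝ) → ℝ :=
  fun x y => -α (br x y)

/-- Chevalley–Eilenberg differential of a 2-form. -/
def ced2 (br : (Fin n → ℝ) → (Fin n → ℝ) → (Fin n → ℝ))
    (α : (Fin n → ℝ) → (Fin n → ℝ) → ℝ) :
    (Fin n → ℝ) → (Fin n → ℝ) → (Fin n → ℝ) → ℝ :=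
  fun x y z => -α (br x y) z + α (br x z) y - α (br y z) x

/-- Chevalley–Eilenberg differential of a 3-form. -/
def ced3 (br : (Fin n → ℝ) → (Fin n → ℝ) → (Fin n → ℝ))
    (α : (Fin n → ℝ) → (Fin n → ℝ) → (Fin n → ℝ) → ℝ) :
    (Fin n → ℝ) → (Fin n → ℝ) → (Fin n → ℝ) → (Fin n → ℝ) → ℝ :=
  fun w x y z =>
    -α (br w x) y z + α (br w y) x z - α (br w z) x y
      - α (br x y) w z + α (br x z) w y - α (br y z) w x

/-- Chevalley–Eilenberg differential of a 4-form. -/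
def ced4 (br : (Fin n → ℝ) → (Fin n → ℝ) → (Fin n → ℝ))
    (β : (Fin n → ℝ) → (Fin n → ℝ) → (Fin n → ℝ) → (Fin n → ℝ) → ℝ) :
    (Fin n → ℝ) → (Fin n → ℝ) → (Fin n → ℝ) → (Fin n → ℝ) → (Fin n → ℝ) → ℝ :=
  fun x0 x1 x2 x3 x4 =>
    -β (br x0 x1) x2 x3 x4 + β (br x0 x2) x1 x3 x4 - β (br x0 x3) x1 x2 x4
      + β (br x0 x4) x1 x2 x3 - β (br x1 x2) x0 x3 x4 + β (br x1 x3) x0 x2 x4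
      - β (br x1 x4) x0 x2 x3 - β (br x2 x3) x0 x1 x4 + β (br x2 x4) x0 x1 x3
      - β (br x3 x4) x0 x1 x2

/-- Wedge of two 1-forms. -/
def w11 (α β : (Fin n → ℝ) → ℝ) : (Fin n → ℝ) → (Fin n → ℝ) → ℝ :=
  fun x y => α x * β y - α y * β x

/-- Wedge of a 1-form and a 2-form. -/
def w12 (θ : (Fin n → ℝ) → ℝ) (α : (Fin n → ℝ) → (Fin n → ℝ) → ℝ) :
    (Fin n → ℝ) → (Fin n → ℝ) → (Fin n → ℝ) → ℝ :=
  fun x y z => θ x * α y z - θ y * α x z + θ z * α x y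

/-- Wedge of a 2-form and a 1-form. -/
def w21 (α : (Fin n → ℝ) → (Fin n → ℝ) → ℝ) (θ : (Fin n → ℝ) → ℝ) :
    (Fin n → ℝ) → (Fin n → ℝ) → (Fin n → ℝ) → ℝ :=
  fun x y z => α x y * θ z - α x z * θ y + α y z * θ x

/-- Wedge of a 1-form and a 3-form. -/
def w13 (θ : (Fin n → ℝ) → ℝ)
    (ψ : (Fin n → ℝ) → (Fin n → ℝ) → (Fin n → ℝ) → ℝ) :
    (Fin n → ℝ) → (Fin n → ℝ) → (Fin n → ℝ) → (Fin n → ℝ) → ℝ :=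
  fun w x y z => θ w * ψ x y z - θ x * ψ w y z + θ y * ψ w x z - θ z * ψ w x y

/-- Wedge of two 2-forms. -/
def w22 (α β : (Fin n → ℝ) → (Fin n → ℝ) → ℝ) :
    (Fin n → ℝ) → (Fin n → ℝ) → (Fin n → ℝ) → (Fin n → ℝ) → ℝ :=
  fun x0 x1 x2 x3 =>
    α x0 x1 * β x2 x3 - α x0 x2 * β x1 x3 + α x0 x3 * β x1 x2
      + α x2 x3 * β x0 x1 - α x1 x3 * β x0 x2 + α x1 x2 * β x0 x3

/-- The basic wedge monomial `eⁱ ∧ eʲ ∧ eᵏ` (0-indexed). -/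
def trip (i j k : Fin n) : (Fin n → ℝ) → (Fin n → ℝ) → (Fin n → ℝ) → ℝ :=
  fun x y z =>
    x i * y j * z k - x i * y k * z j - x j * y i * z k
      + x j * y k * z i + x k * y i * z j - x k * y j * z i

end

noncomputable section

/-- The structure equations of the solvable Lie algebra `𝔰`:
`de¹ = e³⁷, de² = e⁴⁷, de³ = -e¹⁷, de⁴ = -e²⁷, de⁵ = e¹⁴ + e²³,
de⁶ = e¹³ - e²⁴, de⁷ = 0` (0-indexed below). -/
def structEqS (br : (Fin 7 → ℝ) → (Fin 7 → ℝ) → (Fin 7 → ℝ)) : Prop :=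
  ∀ x y : Fin 7 → ℝ,
    ced1 br (ec 0) x y = w11 (ec 2) (ec 6) x y ∧
    ced1 br (ec 1) x y = w11 (ec 3) (ec 6) x y ∧
    ced1 br (ec 2) x y = -w11 (ec 0) (ec 6) x y ∧
    ced1 br (ec 3) x y = -w11 (ec 1) (ec 6) x y ∧
    ced1 br (ec 4) x y = w11 (ec 0) (ec 3) x y + w11 (ec 1) (ec 2) x y ∧
    ced1 br (ec 5) x y = w11 (ec 0) (ec 2) x y - w11 (ec 1) (ec 3) x y ∧
    ced1 br (ec 6) x y = 0

/-- The `G₂`-form `φ = (e¹² + e³⁴ + e⁵⁶) ∧ e⁷ + e¹³⁵ - e¹⁴⁶ - e²³⁶ - e²⁴⁵`. -/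
def phiS : (Fin 7 → ℝ) → (Fin 7 → ℝ) → (Fin 7 → ℝ) → ℝ :=
  fun x y z =>
    w21 (fun a b => w11 (ec 0) (ec 1) a b + w11 (ec 2) (ec 3) a b +
      w11 (ec 4) (ec 5) a b) (ec 6) x y z +
    (trip 0 2 4 x y z - trip 0 3 5 x y z - trip 1 2 5 x y z - trip 1 3 4 x y z)

set_option maxHeartbeats 2000000 in
/-- The explicit bracket of `𝔰`. -/
def brS : (Fin 7 → ℝ) → (Fin 7 → ℝ) → (Fin 7 → ℝ) :=
  fun x y i =>
    if i = 0 then -(x 2 * y 6 - x 6 * y 2)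
    else if i = 1 then -(x 3 * y 6 - x 6 * y 3)
    else if i = 2 then x 0 * y 6 - x 6 * y 0
    else if i = 3 then x 1 * y 6 - x 6 * y 1
    else if i = 4 then -((x 0 * y 3 - x 3 * y 0) + (x 1 * y 2 - x 2 * y 1))
    else if i = 5 then -((x 0 * y 2 - x 2 * y 0) - (x 1 * y 3 - x 3 * y 1))
    else 0

lemma brS_lie : IsLieBracket brS := by
  refine ⟨?_, ?_, ?_, ?_⟩
  · intro x y z; funext i
    fin_cases i <;> simp [brS, Pi.add_apply] <;> ring
  · intro a x y; funext i
    fin_cases i <;> simp [brS, Pi.smul_apply, smul_eq_mul] <;> ring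
  · intro x y; funext i
    fin_cases i <;> simp [brS, Pi.neg_apply] <;> ring
  · intro x y z; funext i
    fin_cases i <;> simp [brS, Pi.add_apply, Pi.zero_apply] <;> ring

lemma brS_struct : structEqS brS := by
  intro x y
  refine ⟨?_, ?_, ?_, ?_, ?_, ?_, ?_⟩ <;>
    simp [ced1, brS, ec, w11] <;> ring

lemma br_comp (br : (Fin 7 → ℝ) → (Fin 7 → ℝ) → (Fin 7 → ℝ)) (h : structEqS br)
    (x y : Fin 7 → ℝ) :
    br x y 0 = x 6 * y 2 - x 2 * y 6 ∧
    br x y 1 = x 6 * y 3 - x 3 * y 6 ∧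
    br x y 2 = x 0 * y 6 - x 6 * y 0 ∧
    br x y 3 = x 1 * y 6 - x 6 * y 1 ∧
    br x y 4 = x 3 * y 0 - x 0 * y 3 + (x 2 * y 1 - x 1 * y 2) ∧
    br x y 5 = x 2 * y 0 - x 0 * y 2 + (x 1 * y 3 - x 3 * y 1) ∧
    br x y 6 = 0 := by
  obtain ⟨h0, h1, h2, h3, h4, h5, h6⟩ := h x y
  simp only [ced1, ec, w11, Pi.add_apply, Pi.sub_apply] at h0 h1 h2 h3 h4 h5 h6
  refine ⟨by linarith, by linarith, by linarith, by linarith, by linarith,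
    by linarith, by linarith⟩

set_option maxHeartbeats 4000000 in
/-- The structure equations of `𝔰` define a Lie algebra, and for
its Chevalley–Eilenberg differential, `dφ = e⁷ ∧ φ`, i.e. `φ` is locally
conformal calibrated with Lee form `θ = -e⁷`. -/
theorem lcc_on_s :
    (∃ br : (Fin 7 → ℝ) → (Fin 7 → ℝ) → (Fin 7 → ℝ), IsLieBracket br ∧ structEqS br) ∧
    ∀ br : (Fin 7 → ℝ) → (Fin 7 → ℝ) → (Fin 7 → ℝ), IsLieBracket br → structEqS br →
      ∀ w x y z : Fin 7 → ℝ, ced3 br phiS w x y z = w13 (ec 6) phiS w x y z := by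
  refine ⟨⟨brS, brS_lie, brS_struct⟩, ?_⟩
  intro br _ hs w x y z
  obtain ⟨a0, a1, a2, a3, a4, a5, a6⟩ := br_comp br hs w x
  obtain ⟨b0, b1, b2, b3, b4, b5, b6⟩ := br_comp br hs w y
  obtain ⟨c0, c1, c2, c3, c4, c5, c6⟩ := br_comp br hs w z
  obtain ⟨d0, d1, d2, d3, d4, d5, d6⟩ := br_comp br hs x y
  obtain ⟨e0, e1, e2, e3, e4, e5, e6⟩ := br_comp br hs x z
  obtain ⟨f0, f1, f2, f3, f4, f5, f6⟩ := br_comp br hs y z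
  simp only [ced3, w13, phiS, w21, w11, trip, ec,
    a0, a1, a2, a3, a4, a5, a6, b0, b1, b2, b3, b4, b5, b6,
    c0, c1, c2, c3, c4, c5, c6, d0, d1, d2, d3, d4, d5, d6,
    e0, e1, e2, e3, e4, e5, e6, f0, f1, f2, f3, f4, f5, f6]
  ring

end
end
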